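/- Let f : ℝ^n → ℝ be lower semicontinuous, V a closed subspace of ℝ^n, B a compact convex set, and P : ℝ^n → ℝ lower semicontinuous with P ≥ 0 and P(x) = 0 iff x ∈ B. Let λ_k → +∞ be strictly increasing positive reals, and for each k let x_k minimize f + λ_k P over V. Then any cluster point x̄ of (x_k) belongs to V ∩ B and minimizes f over V ∩ B. -/

import Mathlib

open Filter

theorem stmt_17 (n : ℕ) (f P : (Fin n → ℝ) → ℝ)
    (hf : LowerSemicontinuous f) (hPlsc : LowerSemicontinuous P)
    (V : Submodule ℝ (Fin n → ℝ)) (hV : IsClosed (V : Set (Fin n → ℝ)))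
    (B : Set (Fin n → ℝ)) (hBc : IsCompact B) (hBconv : Convex ℝ B)
    (hP0 : ∀ x, 0 ≤ P x) (hPiff : ∀ x, P x = 0 ↔ x ∈ B)
    (hVB : ((V : Set (Fin n → ℝ)) ∩ B).Nonempty)
    (lam : ℕ → ℝ) (hlampos : ∀ k, 0 < lam k) (hlammono : StrictMono lam)
    (hlamtop : Tendsto lam atTop atTop)
    (x : ℕ → Fin n → ℝ) (hxV : ∀ k, x k ∈ V)
    (hxmin : ∀ k, ∀ y ∈ V, f (x k) + lam k * P (x k) ≤ f y + lam k * P y)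
    (xbar : Fin n → ℝ) (hcluster : MapClusterPt xbar atTop x) :
    xbar ∈ (V : Set (Fin n → ℝ)) ∩ B ∧ ∀ y ∈ (V : Set (Fin n → ℝ)) ∩ B, f xbar ≤ f y := by
  rw [mapClusterPt_iff_frequently] at hcluster
  obtain ⟨y0, hy0V, hy0B⟩ := hVB
  have hPy0 : P y0 = 0 := (hPiff y0).mpr hy0B
  -- key bound: for y ∈ V ∩ B, f (x k) + lam k * P (x k) ≤ f y
  have key : ∀ k, ∀ y, y ∈ (V : Set (Fin n → ℝ)) ∩ B →
      f (x k) + lam k * P (x k) ≤ f y := by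
    intro k y ⟨hyV, hyB⟩
    have := hxmin k y hyV
    rwa [(hPiff y).mpr hyB, mul_zero, add_zero] at this
  -- xbar ∈ V
  have hxbarV : xbar ∈ V := by
    have : xbar ∈ closure (V : Set (Fin n → ℝ)) := by
      rw [mem_closure_iff_nhds]
      intro t ht
      obtain ⟨k, hk⟩ := (hcluster t ht).exists
      exact ⟨x k, hk, hxV k⟩
    rwa [hV.closure_eq] at this
  -- P xbar = 0
  have hPxbar : P xbar = 0 := by
    by_contra h
    have hpos : 0 < P xbar := lt_of_le_of_ne (hP0 xbar) (Ne.symm h)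
    set c := P xbar / 2 with hc
    have hcpos : 0 < c := by positivity
    have hU : ∀ᶠ z in nhds xbar, c < P z := hPlsc xbar c (by simp [hc]; linarith)
    have hW : ∀ᶠ z in nhds xbar, f xbar - 1 < f z := hf xbar (f xbar - 1) (by linarith)
    obtain ⟨s, hs, hsub⟩ := eventually_iff_exists_mem.mp (hU.and hW)
    have hlam : ∀ᶠ k in atTop, (f y0 - f xbar + 1) / c < lam k :=
      hlamtop.eventually_gt_atTop _
    obtain ⟨k, hkx, hklam⟩ := ((hcluster s hs).and_eventually hlam).exists
    obtain ⟨hcP, hfx⟩ := hsub _ hkx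
    have h1 : f (x k) + lam k * P (x k) ≤ f y0 := key k y0 ⟨hy0V, hy0B⟩
    have h2 : f y0 - f xbar + 1 < lam k * c := by
      exact (div_lt_iff₀ hcpos).mp hklam
    have h3 : lam k * c ≤ lam k * P (x k) :=
      mul_le_mul_of_nonneg_left hcP.le (hlampos k).le
    linarith
  have hxbarB : xbar ∈ B := (hPiff xbar).mp hPxbar
  refine ⟨⟨hxbarV, hxbarB⟩, ?_⟩
  intro y hy
  by_contra h
  push_neg at h
  have hU : ∀ᶠ z in nhds xbar, f y < f z := hf xbar (f y) h
  obtain ⟨s, hs, hsub⟩ := eventually_iff_exists_mem.mp hU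
  obtain ⟨k, hkx⟩ := (hcluster s hs).exists
  have h1 : f (x k) + lam k * P (x k) ≤ f y := key k y hy
  have h2 : f y < f (x k) := hsub _ hkx
  have h3 : 0 ≤ lam k * P (x k) := mul_nonneg (hlampos k).le (hP0 _)
  linarith
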